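/- Fix an integer b ≥ 2, κ_b := π√b/(√2·(b−1)), and β̂ ∈ (0, κ_b). Define M̂_n(x) := x + ((b−1)/(2n))·x² + β̂²(b−1)/(b·n) for x ≥ 0 and n ≥ 1, and define γ(x,y) := arctan((√b/(β̂√2))·x) + (β̂(b−1)/√(2b))·y. For ε > 0 let A_ε := {(x,m,n) ∈ [0,∞)×ℕ×ℕ : n ≥ 1 and γ(x, m/n) < π/2 − ε}. Then for every ε > 0 there is a constant C > 0 such that for all (x,m,n) ∈ A_ε, the derivative of the m-fold iterate satisfies (d/dx) M̂_n^m(x) ≤ C. -/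

import Mathlib

open Filter Real

private lemma arctan_le_aux {v u : ℝ} (hv : 0 ≤ v) (hvu : v ≤ u) :
    Real.arctan u ≤ Real.arctan v + (u - v) / (1 + v ^ 2) := by
  rcases eq_or_lt_of_le hvu with rfl | h
  · simp
  · obtain ⟨t, ht, heq⟩ := exists_hasDerivAt_eq_slope Real.arctan (fun y => 1 / (1 + y ^ 2)) h
      Real.continuous_arctan.continuousOn (fun y _ => Real.hasDerivAt_arctan y)
    have htv : v ≤ t := le_of_lt ht.1
    have h1 : (0:ℝ) < 1 + v ^ 2 := by positivity
    have h2 : (0:ℝ) < 1 + t ^ 2 := by positivity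
    have hle : 1 / (1 + t ^ 2) ≤ 1 / (1 + v ^ 2) := by
      apply one_div_le_one_div_of_le h1; nlinarith
    have huv : (0:ℝ) < u - v := sub_pos.mpr h
    have heq2 : Real.arctan u - Real.arctan v = (u - v) * (1 / (1 + t ^ 2)) := by
      rw [heq]; field_simp
    have hfin : (u - v) * (1 / (1 + t ^ 2)) ≤ (u - v) * (1 / (1 + v ^ 2)) :=
      mul_le_mul_of_nonneg_left hle huv.le
    have : (u - v) * (1 / (1 + v ^ 2)) = (u - v) / (1 + v ^ 2) := by ring
    linarith

private lemma iter_hasDerivAt (f f' : ℝ → ℝ) (hf : ∀ y, HasDerivAt f (f' y) y) :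
    ∀ (m : ℕ) (x : ℝ), HasDerivAt (f^[m]) (∏ k ∈ Finset.range m, f' (f^[k] x)) x := by
  intro m
  induction m with
  | zero => intro x; simpa using hasDerivAt_id x
  | succ m ih =>
    intro x
    have h1 : HasDerivAt (f^[m] ∘ f) ((∏ k ∈ Finset.range m, f' (f^[k] (f x))) * f' x) x :=
      (ih (f x)).comp x (hf x)
    rw [Function.iterate_succ]
    convert h1 using 1
    rw [Finset.prod_range_succ']
    simp [Function.iterate_succ_apply]

set_option maxHeartbeats 1000000 in
/-- For `b ≥ 2`, `κ_b = π√b/(√2(b−1))`, `β̂ ∈ (0, κ_b)`, the maps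
`M̂_n(x) = x + ((b−1)/(2n))x² + β̂²(b−1)/(bn)` and
`γ(x,y) = arctan((√b/(β̂√2))x) + (β̂(b−1)/√(2b))y`: for every `ε > 0` there is `C > 0`
such that whenever `x ≥ 0`, `n ≥ 1`, and `γ(x, m/n) < π/2 − ε`, the derivative of the
`m`-fold iterate satisfies `(M̂_n^[m])'(x) ≤ C`. -/
theorem stmt16 (b : ℕ) (hb : 2 ≤ b) (kappa : ℝ)
    (hkappa : kappa = Real.pi * Real.sqrt b / (Real.sqrt 2 * ((b : ℝ) - 1)))
    (beta : ℝ) (hbeta : 0 < beta) (hbetalt : beta < kappa)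
    (Mhat : ℕ → ℝ → ℝ)
    (hMhat : ∀ n : ℕ, ∀ x : ℝ,
      Mhat n x = x + (((b : ℝ) - 1) / (2 * n)) * x ^ 2
        + beta ^ 2 * ((b : ℝ) - 1) / ((b : ℝ) * n))
    (gamma : ℝ → ℝ → ℝ)
    (hgamma : ∀ x y : ℝ,
      gamma x y = Real.arctan ((Real.sqrt b / (beta * Real.sqrt 2)) * x)
        + (beta * ((b : ℝ) - 1) / Real.sqrt (2 * b)) * y) :
    ∀ ε : ℝ, 0 < ε → ∃ C : ℝ, 0 < C ∧
      ∀ (x : ℝ) (m n : ℕ), 0 ≤ x → 1 ≤ n →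
        gamma x ((m : ℝ) / n) < Real.pi / 2 - ε →
        deriv (fun y : ℝ => (Mhat n)^[m] y) x ≤ C := by
  intro ε hε
  have hB2 : (2:ℝ) ≤ (b:ℝ) := by exact_mod_cast hb
  set B : ℝ := (b : ℝ) with hBdef
  have hB1 : (0:ℝ) < B - 1 := by linarith
  have hB0 : (0:ℝ) < B := by linarith
  have hpi := Real.pi_pos
  set ε' : ℝ := min ε (π/4) with hε'def
  have hε'pos : 0 < ε' := lt_min hε (by linarith)
  have hε'le : ε' ≤ π/4 := min_le_right _ _
  have hεε : ε' ≤ ε := min_le_left _ _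
  have hangle1 : 0 < π/2 - ε' := by linarith
  have hangle2 : π/2 - ε' < π/2 := by linarith
  have hsB : (0:ℝ) < Real.sqrt B := Real.sqrt_pos.mpr hB0
  have hs2 : (0:ℝ) < Real.sqrt 2 := by positivity
  have hs2sq : Real.sqrt 2 ^ 2 = 2 := Real.sq_sqrt (by norm_num)
  have hsBsq : Real.sqrt B ^ 2 = B := Real.sq_sqrt hB0.le
  have h2B : Real.sqrt (2*B) = Real.sqrt 2 * Real.sqrt B := Real.sqrt_mul (by norm_num) B
  set c : ℝ := Real.sqrt B / (beta * Real.sqrt 2) with hcdef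
  set d : ℝ := beta * (B - 1) / Real.sqrt (2 * B) with hddef
  have hc : 0 < c := div_pos hsB (mul_pos hbeta hs2)
  have hd : 0 < d := by
    apply div_pos (mul_pos hbeta hB1)
    rw [h2B]; positivity
  have hc2 : c ^ 2 = B / (2 * beta ^ 2) := by
    rw [hcdef, div_pow, mul_pow, hs2sq, hsBsq]; ring
  have hdc : d = c * beta ^ 2 * (B - 1) / B := by
    rw [hddef, hcdef, h2B]
    have hBB : Real.sqrt B * Real.sqrt B = B := Real.mul_self_sqrt hB0.le
    field_simp
    linear_combination -hsBsq
  set X : ℝ := Real.tan (π/2 - ε') / c with hXdef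
  have htanpos : 0 < Real.tan (π/2 - ε') := Real.tan_pos_of_pos_of_lt_pi_div_two hangle1 hangle2
  have hX : 0 < X := div_pos htanpos hc
  refine ⟨Real.exp ((B-1) * X * (π/2) / d), Real.exp_pos _, ?_⟩
  intro x m n hx hn hγcond
  have hn0 : (0:ℝ) < (n:ℝ) := by exact_mod_cast Nat.lt_of_lt_of_le Nat.zero_lt_one hn
  -- derivative of one step
  have hM' : ∀ y : ℝ, HasDerivAt (Mhat n) (1 + (B-1)/n * y) y := by
    intro y
    have hMeq : Mhat n = fun y : ℝ => y + ((B-1)/(2*n)) * y^2 + beta^2 * (B-1)/(B*n) :=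
      funext (hMhat n)
    rw [hMeq]
    have h1 : HasDerivAt (fun y : ℝ => y + ((B-1)/(2*n)) * y^2 + beta^2 * (B-1)/(B*n))
        (1 + ((B-1)/(2*n)) * (↑2 * y ^ (2-1))) y :=
      ((hasDerivAt_id y).add ((hasDerivAt_pow 2 y).const_mul ((B-1)/(2*n)))).add_const _
    convert h1 using 1
    field_simp
    ring
  -- one step is expanding and preserves nonnegativity
  have hstep : ∀ y : ℝ, 0 ≤ y → y ≤ Mhat n y := by
    intro y hy
    rw [hMhat]
    have e1 : 0 ≤ ((B-1)/(2*(n:ℝ))) * y^2 :=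
      mul_nonneg (div_nonneg hB1.le (by positivity)) (sq_nonneg y)
    have e2 : 0 ≤ beta^2 * (B-1) / (B*(n:ℝ)) :=
      div_nonneg (mul_nonneg (sq_nonneg beta) hB1.le) (by positivity)
    linarith
  have hxk : ∀ k : ℕ, 0 ≤ (Mhat n)^[k] x := by
    intro k
    induction k with
    | zero => simpa using hx
    | succ k ih =>
      rw [Function.iterate_succ_apply']
      exact le_trans ih (hstep _ ih)
  -- key arctan step inequality
  have hkey : ∀ y : ℝ, 0 ≤ y → Real.arctan (c * Mhat n y) ≤ Real.arctan (c * y) + d / n := by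
    intro y hy
    have hyM : y ≤ Mhat n y := hstep y hy
    have hcy : c * y ≤ c * Mhat n y := mul_le_mul_of_nonneg_left hyM hc.le
    have h1 := arctan_le_aux (mul_nonneg hc.le hy) hcy
    have h2 : (c * Mhat n y - c * y) / (1 + (c*y)^2) = d / n := by
      rw [div_eq_iff (by positivity : (1:ℝ) + (c*y)^2 ≠ 0), hMhat, hdc]
      have hsq : (c*y)^2 = (B / (2*beta^2)) * y^2 := by rw [mul_pow, hc2]
      rw [hsq]
      field_simp
      ring
    linarith
  -- iterate the arctan inequality
  have hθ : ∀ k : ℕ, Real.arctan (c * (Mhat n)^[k] x)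
      ≤ Real.arctan (c * x) + (k:ℝ) * (d / n) := by
    intro k
    induction k with
    | zero => simp
    | succ k ih =>
      rw [Function.iterate_succ_apply']
      have := hkey _ (hxk k)
      push_cast
      linarith
  -- consequence of the gamma condition
  have hγle : Real.arctan (c * x) + (m:ℝ) * (d / n) < π/2 - ε' := by
    have h1 : gamma x ((m:ℝ)/n) = Real.arctan (c * x) + d * ((m:ℝ)/n) := hgamma x _
    have h2 : (m:ℝ) * (d / n) = d * ((m:ℝ)/n) := by ring
    rw [h2, ← h1]
    calc gamma x ((m:ℝ)/n) < π/2 - ε := hγcond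
      _ ≤ π/2 - ε' := by linarith
  have harctannn : 0 ≤ Real.arctan (c * x) := by simpa using Real.arctan_strictMono.monotone (mul_nonneg hc.le hx)
  -- all iterates up to m are bounded by X
  have hbound : ∀ k : ℕ, k ≤ m → (Mhat n)^[k] x ≤ X := by
    intro k hk
    have h1 : (k:ℝ) * (d / n) ≤ (m:ℝ) * (d / n) :=
      mul_le_mul_of_nonneg_right (by exact_mod_cast hk) (div_nonneg hd.le hn0.le)
    have h2 : Real.arctan (c * (Mhat n)^[k] x) < π/2 - ε' := lt_of_le_of_lt (by linarith [hθ k]) hγle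
    have h3 : Real.tan (Real.arctan (c * (Mhat n)^[k] x)) < Real.tan (π/2 - ε') :=
      Real.tan_lt_tan_of_lt_of_lt_pi_div_two (Real.neg_pi_div_two_lt_arctan _) hangle2 h2
    rw [Real.tan_arctan] at h3
    rw [hXdef, le_div_iff₀ hc]
    nlinarith
  -- bound on m/n
  have hmn : (m:ℝ)/n ≤ (π/2)/d := by
    rw [div_le_div_iff₀ hn0 hd]
    have h1 : (m:ℝ) * (d/n) < π/2 := by linarith
    have h2 : (m:ℝ) * d / n < π/2 := by rw [mul_div_assoc]; exact h1
    have h3 := (div_lt_iff₀ hn0).mp h2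
    linarith
  -- compute and bound the derivative
  have hder := iter_hasDerivAt (Mhat n) (fun y => 1 + (B-1)/n * y) hM' m x
  have hderiv : deriv (fun y : ℝ => (Mhat n)^[m] y) x
      = ∏ k ∈ Finset.range m, (1 + (B-1)/n * (Mhat n)^[k] x) := hder.deriv
  rw [hderiv]
  have hcoef : 0 ≤ (B-1)/(n:ℝ) := div_nonneg hB1.le hn0.le
  calc ∏ k ∈ Finset.range m, (1 + (B-1)/n * (Mhat n)^[k] x)
      ≤ ∏ k ∈ Finset.range m, Real.exp ((B-1)/n * (Mhat n)^[k] x) := by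
        apply Finset.prod_le_prod
        · intro k _
          have := mul_nonneg hcoef (hxk k)
          linarith
        · intro k _
          have := Real.add_one_le_exp ((B-1)/n * (Mhat n)^[k] x)
          linarith
    _ = Real.exp (∑ k ∈ Finset.range m, (B-1)/n * (Mhat n)^[k] x) := (Real.exp_sum _ _).symm
    _ ≤ Real.exp ((B-1) * X * (π/2) / d) := by
        apply Real.exp_le_exp.mpr
        calc ∑ k ∈ Finset.range m, (B-1)/n * (Mhat n)^[k] x
            ≤ ∑ k ∈ Finset.range m, (B-1)/n * X := by
              apply Finset.sum_le_sum
              intro k hk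
              exact mul_le_mul_of_nonneg_left
                (hbound k (le_of_lt (Finset.mem_range.mp hk))) hcoef
          _ = (m:ℝ) * ((B-1)/n * X) := by
              rw [Finset.sum_const, Finset.card_range, nsmul_eq_mul]
          _ = ((B-1) * X) * ((m:ℝ)/n) := by ring
          _ ≤ ((B-1) * X) * ((π/2)/d) := by
              apply mul_le_mul_of_nonneg_left hmn
              exact mul_nonneg hB1.le hX.le
          _ = (B-1) * X * (π/2) / d := by ring
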